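/- Let k be an algebraically closed field of characteristic 0 and let γ be an involution of k, i.e. a ring automorphism of k with γ ∘ γ = id and γ ≠ id. Then −1 is not a square in the fixed field k_γ = {κ ∈ k | γ(κ) = κ}; that is, there is no a ∈ k with γ(a) = a and a² = −1. -/
import Mathlib


theorem stmt_0 (k : Type*) [Field k] [IsAlgClosed k] [CharZero k]
    (γ : k ≃+* k) (hinv : ∀ x, γ (γ x) = x) (hne : γ ≠ RingEquiv.refl k) :
    ¬ ∃ a : k, γ a = a ∧ a ^ 2 = -1 := by
  rintro ⟨a, ha, ha2⟩
  obtain ⟨c, hc⟩ : ∃ c : k, γ c ≠ c := by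
    by_contra h
    push_neg at h
    exact hne (RingEquiv.ext fun x => h x)
  set r := c - γ c with hr
  have hr0 : r ≠ 0 := sub_ne_zero.mpr (fun h => hc h.symm)
  have hγr : γ r = -r := by
    rw [hr, map_sub, hinv]
    ring
  obtain ⟨s, hs⟩ : ∃ s : k, s ^ 2 = r := by
    obtain ⟨s, hs⟩ := IsAlgClosed.exists_pow_nat_eq r (n := 2) (by norm_num)
    exact ⟨s, hs⟩
  have hs0 : s ≠ 0 := fun h => hr0 (by rw [← hs, h]; ring)
  have hsq : (γ s - a * s) * (γ s + a * s) = 0 := by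
    have h1 : (γ s) ^ 2 = -r := by rw [← map_pow, hs, hγr]
    have h2 : (a * s) ^ 2 = -r := by rw [mul_pow, ha2, hs]; ring
    linear_combination h1.trans h2.symm
  have hs2 : s = -s := by
    rcases mul_eq_zero.mp hsq with h | h
    · have h' : γ s = a * s := by linear_combination h
      have := hinv s
      rw [h', map_mul, ha, h'] at this
      calc s = a ^ 2 * s := by linear_combination -this
        _ = -s := by rw [ha2]; ring
    · have h' : γ s = -(a * s) := by linear_combination h
      have := hinv s
      rw [h', map_neg, map_mul, ha, h'] at this
      calc s = a ^ 2 * s := by linear_combination -this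
        _ = -s := by rw [ha2]; ring
  have h2s : (2 : k) * s = 0 := by linear_combination hs2
  rcases mul_eq_zero.mp h2s with h | h
  · exact two_ne_zero h
  · exact hs0 h
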